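/- Let β : ℝᵐ → ℝⁿ and γ : ℝⁿ → ℝᵐ be continuously differentiable, let λ_C ∈ ℝᵐ, and let λ̂_U ∈ ℝⁿ be a target. Define e = λ̂_U - β(λ_C) and the hidden target λ̂_C = λ_C + γ(λ̂_U) - γ(β(λ_C)). Suppose the largest eigenvalue μ of (I - J_β J_γ)ᵀ(I - J_β J_γ) (Jacobians evaluated at the relevant points) satisfies μ < 1. Then there exists δ > 0 such that whenever ‖e‖ < δ, ‖λ̂_U - β(λ̂_C)‖² ≤ ‖λ̂_U - β(λ_C)‖² (i.e., achieving the hidden target does not increase the output error). -/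

import Mathlib

open EuclideanSpace

/-- Theorem 1 (difference target propagation guarantee): if the largest eigenvalue μ of
(I - J_β J_γ)ᵀ(I - J_β J_γ) is less than 1 — expressed as the equivalent quadratic bound
‖v - J_β (J_γ v)‖² ≤ μ‖v‖² — then for a sufficiently small output error e, achieving the
hidden target does not increase the output error. -/
theorem target_prop_guarantee {m n : ℕ}
    (β : EuclideanSpace ℝ (Fin m) → EuclideanSpace ℝ (Fin n))
    (γ : EuclideanSpace ℝ (Fin n) → EuclideanSpace ℝ (Fin m))
    (hβ : ContDiff ℝ 1 β) (hγ : ContDiff ℝ 1 γ)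
    (lamC : EuclideanSpace ℝ (Fin m))
    (Jβ : EuclideanSpace ℝ (Fin m) →L[ℝ] EuclideanSpace ℝ (Fin n))
    (Jγ : EuclideanSpace ℝ (Fin n) →L[ℝ] EuclideanSpace ℝ (Fin m))
    (hJβ : Jβ = fderiv ℝ β lamC) (hJγ : Jγ = fderiv ℝ γ (β lamC))
    (μ : ℝ) (hμ : μ < 1)
    (heig : ∀ v : EuclideanSpace ℝ (Fin n), ‖v - Jβ (Jγ v)‖ ^ 2 ≤ μ * ‖v‖ ^ 2) :
    ∃ δ > 0, ∀ lamU : EuclideanSpace ℝ (Fin n), ‖lamU - β lamC‖ < δ →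
      ‖lamU - β (lamC + γ lamU - γ (β lamC))‖ ^ 2 ≤ ‖lamU - β lamC‖ ^ 2 := by
  classical
  have hβd : Differentiable ℝ β := hβ.differentiable one_ne_zero
  have hγd : Differentiable ℝ γ := hγ.differentiable one_ne_zero
  -- the composite map g e = (β lamC + e) - β (lamC + γ (β lamC + e) - γ (β lamC))
  set φ : EuclideanSpace ℝ (Fin n) → EuclideanSpace ℝ (Fin m) :=
    fun e => lamC + γ (β lamC + e) - γ (β lamC) with hφ
  set g : EuclideanSpace ℝ (Fin n) → EuclideanSpace ℝ (Fin n) :=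
    fun e => (β lamC + e) - β (φ e) with hg
  set D : EuclideanSpace ℝ (Fin n) →L[ℝ] EuclideanSpace ℝ (Fin n) :=
    ContinuousLinearMap.id ℝ _ - Jβ.comp Jγ with hD
  -- derivative of φ at 0 is Jγ
  have hφ0 : φ 0 = lamC := by simp [hφ]
  have htrans : HasFDerivAt (fun e : EuclideanSpace ℝ (Fin n) => β lamC + e)
      (ContinuousLinearMap.id ℝ _) 0 :=
    (hasFDerivAt_id (0 : EuclideanSpace ℝ (Fin n))).const_add _
  have hγ' : HasFDerivAt γ Jγ (β lamC) := by
    rw [hJγ]; exact (hγd (β lamC)).hasFDerivAt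
  have hφ' : HasFDerivAt φ Jγ 0 := by
    have hc : HasFDerivAt (fun e => γ (β lamC + e)) (Jγ.comp (ContinuousLinearMap.id ℝ _)) 0 := by
      have hγ'' : HasFDerivAt γ Jγ ((fun e : EuclideanSpace ℝ (Fin n) => β lamC + e) 0) := by
        simpa using hγ'
      exact hγ''.comp (0 : EuclideanSpace ℝ (Fin n)) htrans
    have := (hc.const_add lamC).sub_const (γ (β lamC))
    simpa [hφ] using this
  have hβ' : HasFDerivAt β Jβ (φ 0) := by
    rw [hφ0, hJβ]; exact (hβd lamC).hasFDerivAt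
  have hg' : HasFDerivAt g D 0 := by
    have hcomp : HasFDerivAt (fun e => β (φ e)) (Jβ.comp Jγ) 0 := hβ'.comp 0 hφ'
    have := htrans.sub hcomp
    exact this
  have hg0 : g 0 = 0 := by simp [hg, hφ0]
  -- constants
  set μ' : ℝ := max μ 0 with hμ'
  have hμ'0 : 0 ≤ μ' := le_max_right _ _
  have hμ'1 : μ' < 1 := max_lt hμ one_pos
  have hsq : Real.sqrt μ' < 1 := by
    rw [show (1:ℝ) = Real.sqrt 1 by simp]
    exact Real.sqrt_lt_sqrt hμ'0 hμ'1
  set ε : ℝ := 1 - Real.sqrt μ' with hε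
  have hεpos : 0 < ε := by simp [hε]; linarith
  -- bound on D
  have hDbound : ∀ v, ‖D v‖ ≤ Real.sqrt μ' * ‖v‖ := by
    intro v
    have h1 : ‖D v‖ ^ 2 ≤ μ' * ‖v‖ ^ 2 := by
      have := heig v
      have h2 : μ * ‖v‖ ^ 2 ≤ μ' * ‖v‖ ^ 2 :=
        mul_le_mul_of_nonneg_right (le_max_left _ _) (by positivity)
      calc ‖D v‖ ^ 2 = ‖v - Jβ (Jγ v)‖ ^ 2 := by simp [hD]
        _ ≤ μ * ‖v‖ ^ 2 := this
        _ ≤ μ' * ‖v‖ ^ 2 := h2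
    have h3 : (Real.sqrt μ' * ‖v‖) ^ 2 = μ' * ‖v‖ ^ 2 := by
      rw [mul_pow, Real.sq_sqrt hμ'0]
    calc ‖D v‖ = Real.sqrt (‖D v‖ ^ 2) := by rw [Real.sqrt_sq (norm_nonneg _)]
      _ ≤ Real.sqrt ((Real.sqrt μ' * ‖v‖) ^ 2) := Real.sqrt_le_sqrt (by rw [h3]; exact h1)
      _ = Real.sqrt μ' * ‖v‖ := Real.sqrt_sq (by positivity)
  -- littleO from the derivative
  have hlo := hg'.isLittleO
  rw [Asymptotics.isLittleO_iff] at hlo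
  have hev := hlo hεpos
  rw [Metric.eventually_nhds_iff] at hev
  obtain ⟨δ, hδpos, hδ⟩ := hev
  refine ⟨δ, hδpos, fun lamU hlt => ?_⟩
  set e : EuclideanSpace ℝ (Fin n) := lamU - β lamC with he
  have hdist : dist e 0 < δ := by simpa [he, dist_eq_norm] using hlt
  have key := hδ hdist
  simp only [hg0, sub_zero] at key
  have hge : g e = lamU - β (lamC + γ lamU - γ (β lamC)) := by
    have h1 : β lamC + e = lamU := by simp [he]
    simp [hg, hφ, h1]
  have hnorm : ‖g e‖ ≤ ‖e‖ := by
    calc ‖g e‖ = ‖D e + (g e - D e)‖ := by rw [add_sub_cancel]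
      _ ≤ ‖D e‖ + ‖g e - D e‖ := norm_add_le _ _
      _ ≤ Real.sqrt μ' * ‖e‖ + ε * ‖e‖ := add_le_add (hDbound e) key
      _ = ‖e‖ := by rw [hε]; ring
  rw [← hge]
  have := pow_le_pow_left₀ (norm_nonneg _) hnorm 2
  simpa [he] using this
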